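/- Let (Ω,Σ) be a measurable space, and let 𝔭, 𝔮 be probability measures on Ω with 𝔭 ≪ 𝔮 and H := H(𝔭|𝔮) < ∞. Let h : Ω → (0,∞) be measurable and let p, q > 0 be real exponents with min(p,q) ≤ 1 such that ∫ h^q d𝔮 < ∞ and ∫ h^{−p} d𝔮 < ∞. Then ∫ |log h| d𝔭 ≤ 2·e^{H−1} · ( 1/min(p,q) + max( 0, log₂( (‖h‖_{L^q(𝔮)} + ‖h^{−1}‖_{L^p(𝔮)})/2 ) ) ). -/

import Mathlib

open MeasureTheory Real

/-- Young-type inequality: `v * u ≤ v * log v - v + exp u` for `v ≥ 0`. -/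
lemma aux_young (u v : ℝ) (hv : 0 ≤ v) :
    v * u ≤ v * Real.log v - v + Real.exp u := by
  rcases eq_or_lt_of_le hv with hv0 | hv0
  · simp only [← hv0, zero_mul, sub_zero, zero_add]
    positivity
  · have h1 : (u - Real.log v) + 1 ≤ Real.exp (u - Real.log v) :=
      Real.add_one_le_exp _
    have h2 : v * ((u - Real.log v) + 1) ≤ v * Real.exp (u - Real.log v) :=
      mul_le_mul_of_nonneg_left h1 hv
    have h3 : v * Real.exp (u - Real.log v) = Real.exp u := by
      rw [Real.exp_sub, Real.exp_log hv0]
      field_simp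
    rw [h3] at h2
    nlinarith [h2]

/-- Bernoulli-type inequality: `x ^ s ≤ s * x + (1 - s)` for `x ≥ 0`, `0 ≤ s ≤ 1`. -/
lemma aux_bernoulli {x s : ℝ} (hx : 0 ≤ x) (hs0 : 0 ≤ s) (hs1 : s ≤ 1) :
    x ^ s ≤ s * x + (1 - s) := by
  have := Real.geom_mean_le_arith_mean2_weighted (w₁ := s) (w₂ := 1 - s) (p₁ := x)
    (p₂ := 1) hs0 (by linarith) hx zero_le_one (by ring)
  simpa using this

/-- Tangent-line inequality for `rpow`. -/
lemma aux_tangent {x c s : ℝ} (hx : 0 ≤ x) (hc : 0 < c) (hs0 : 0 ≤ s) (hs1 : s ≤ 1) :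
    x ^ s ≤ (s * (x / c) + (1 - s)) * c ^ s := by
  have h1 : (x / c) ^ s ≤ s * (x / c) + (1 - s) :=
    aux_bernoulli (div_nonneg hx hc.le) hs0 hs1
  have hcs : (0:ℝ) < c ^ s := Real.rpow_pos_of_pos hc s
  have h2 : x ^ s = (x / c) ^ s * c ^ s := by
    rw [Real.div_rpow hx hc.le]
    field_simp
  rw [h2]
  exact mul_le_mul_of_nonneg_right h1 hcs.le

/-- Jensen's inequality for concave power functions on a probability space. -/
lemma aux_jensen {Ω : Type*} [MeasurableSpace Ω] (𝔮 : Measure Ω) [IsProbabilityMeasure 𝔮]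
    {u : Ω → ℝ} (hum : Measurable u) (hupos : ∀ x, 0 < u x) (hu : Integrable u 𝔮)
    {s : ℝ} (hs0 : 0 < s) (hs1 : s ≤ 1) :
    ∫ x, u x ^ s ∂𝔮 ≤ (∫ x, u x ∂𝔮) ^ s := by
  set c : ℝ := ∫ x, u x ∂𝔮 with hc
  have hcpos : 0 < c := by
    rw [hc, integral_pos_iff_support_of_nonneg (fun x => (hupos x).le) hu]
    have hsupp : Function.support u = Set.univ := Set.eq_univ_of_forall fun x => (hupos x).ne'
    rw [hsupp]
    simp
  have hpt : ∀ x, u x ^ s ≤ (s * (u x / c) + (1 - s)) * c ^ s :=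
    fun x => aux_tangent (hupos x).le hcpos hs0.le hs1
  have hint : Integrable (fun x => (s * (u x / c) + (1 - s)) * c ^ s) 𝔮 :=
    (((hu.div_const c).const_mul s).add (integrable_const _)).mul_const _
  calc ∫ x, u x ^ s ∂𝔮
      ≤ ∫ x, (s * (u x / c) + (1 - s)) * c ^ s ∂𝔮 :=
        integral_mono_of_nonneg
          (Filter.Eventually.of_forall fun x => Real.rpow_nonneg (hupos x).le s)
          hint (Filter.Eventually.of_forall hpt)
    _ = (∫ x, (s * (u x / c) + (1 - s)) ∂𝔮) * c ^ s := by
        rw [integral_mul_const]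
    _ = (s * (c / c) + (1 - s)) * c ^ s := by
        rw [integral_add (((hu.div_const c).const_mul s)) (integrable_const _),
          integral_const_mul, integral_div, integral_const]
        simp [← hc]
    _ = c ^ s := by
        rw [div_self hcpos.ne']
        ring

/-- `2 * exp (x - 1)` dominates `x + log 2`. -/
lemma aux_exp_bound (x : ℝ) : x + Real.log 2 ≤ 2 * Real.exp (x - 1) := by
  have h1 : (x - 1 + Real.log 2) + 1 ≤ Real.exp (x - 1 + Real.log 2) :=
    Real.add_one_le_exp _
  have h2 : Real.exp (x - 1 + Real.log 2) = 2 * Real.exp (x - 1) := by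
    rw [Real.exp_add, Real.exp_log two_pos]
    ring
  linarith

/-- Pointwise entropy bound: `t - 1 ≤ t * log t` for `t ≥ 0`. -/
lemma aux_entropy_pt {t : ℝ} (ht : 0 ≤ t) : t - 1 ≤ t * Real.log t := by
  rcases eq_or_lt_of_le ht with h0 | h0
  · rw [← h0]; simp
  · have hlog := Real.log_le_sub_one_of_pos (inv_pos.mpr h0)
    rw [Real.log_inv] at hlog
    have h2 := mul_le_mul_of_nonneg_left hlog h0.le
    have h3 : t * t⁻¹ = 1 := mul_inv_cancel₀ h0.ne'
    nlinarith [h2, h3]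

set_option maxHeartbeats 1000000 in
/-- Corollary, eq. (final:bound:L1).
If `𝔭 ≪ 𝔮` are probability measures with finite relative entropy
`H = ∫ log (d𝔭/d𝔮) d𝔭`, `h` is a positive measurable function with
`h ∈ L^q(𝔮)` and `h⁻¹ ∈ L^p(𝔮)` for some `p, q > 0` with `min(p,q) ≤ 1`, then
`∫ |log h| d𝔭 ≤ 2 e^{H-1} (1/min(p,q) + (log₂((‖h‖_q + ‖h⁻¹‖_p)/2))⁺)`. -/
theorem log_integrability_corollary
    {Ω : Type*} [MeasurableSpace Ω]
    (𝔭 𝔮 : Measure Ω) [IsProbabilityMeasure 𝔭] [IsProbabilityMeasure 𝔮]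
    (hac : 𝔭 ≪ 𝔮)
    (hH : Integrable (fun x => Real.log ((𝔭.rnDeriv 𝔮 x).toReal)) 𝔭)
    (h : Ω → ℝ) (hmeas : Measurable h) (hpos : ∀ x, 0 < h x)
    (p q : ℝ) (hp : 0 < p) (hq : 0 < q) (hpq : min p q ≤ 1)
    (hhq : Integrable (fun x => h x ^ q) 𝔮)
    (hhp : Integrable (fun x => h x ^ (-p)) 𝔮) :
    ∫ x, |Real.log (h x)| ∂𝔭 ≤
      2 * Real.exp ((∫ x, Real.log ((𝔭.rnDeriv 𝔮 x).toReal) ∂𝔭) - 1) *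
        (1 / min p q +
          max 0
            (Real.logb 2
              (((∫ x, h x ^ q ∂𝔮) ^ (1 / q) + (∫ x, h x ^ (-p) ∂𝔮) ^ (1 / p)) / 2))) := by
  set H : ℝ := ∫ x, Real.log ((𝔭.rnDeriv 𝔮 x).toReal) ∂𝔭 with hHdef
  set m : ℝ := min p q with hmdef
  have hm : 0 < m := lt_min hp hq
  have hm1 : m ≤ 1 := hpq
  have hmq : m ≤ q := min_le_right p q
  have hmp : m ≤ p := min_le_left p q
  -- positivity of the two `𝔮`-integrals
  have hIq : 0 < ∫ x, h x ^ q ∂𝔮 := by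
    rw [integral_pos_iff_support_of_nonneg (fun x => Real.rpow_nonneg (hpos x).le q) hhq]
    have hsupp : Function.support (fun x => h x ^ q) = Set.univ :=
      Set.eq_univ_of_forall fun x => (Real.rpow_pos_of_pos (hpos x) q).ne'
    rw [hsupp]; simp
  have hIp : 0 < ∫ x, h x ^ (-p) ∂𝔮 := by
    rw [integral_pos_iff_support_of_nonneg (fun x => Real.rpow_nonneg (hpos x).le (-p)) hhp]
    have hsupp : Function.support (fun x => h x ^ (-p)) = Set.univ :=
      Set.eq_univ_of_forall fun x => (Real.rpow_pos_of_pos (hpos x) (-p)).ne'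
    rw [hsupp]; simp
  set A : ℝ := (∫ x, h x ^ q ∂𝔮) ^ (1 / q) with hA
  set B : ℝ := (∫ x, h x ^ (-p) ∂𝔮) ^ (1 / p) with hB
  have hApos : 0 < A := Real.rpow_pos_of_pos hIq _
  have hBpos : 0 < B := Real.rpow_pos_of_pos hIp _
  set c : ℝ := (A + B) / 2 with hc
  have hcpos : 0 < c := by rw [hc]; positivity
  set D : ℝ := max 0 (Real.logb 2 c) with hD
  have hD0 : 0 ≤ D := le_max_left _ _
  have hinvmD : (0:ℝ) ≤ 1 / m + D := by positivity
  -- trivial case: |log h| not integrable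
  by_cases hLint : Integrable (fun x => |Real.log (h x)|) 𝔭
  swap
  · rw [integral_undef hLint]
    positivity
  -- abbreviation for the density
  have hρnn : ∀ x, (0:ℝ) ≤ (𝔭.rnDeriv 𝔮 x).toReal := fun _ => ENNReal.toReal_nonneg
  have hρint : Integrable (fun x => (𝔭.rnDeriv 𝔮 x).toReal) 𝔮 :=
    Measure.integrable_toReal_rnDeriv
  have hρ1 : ∫ x, (𝔭.rnDeriv 𝔮 x).toReal ∂𝔮 = 1 := by
    rw [Measure.integral_toReal_rnDeriv hac]; simp
  have hρlogint : Integrable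
      (fun x => (𝔭.rnDeriv 𝔮 x).toReal * Real.log ((𝔭.rnDeriv 𝔮 x).toReal)) 𝔮 := by
    have := (integrable_rnDeriv_smul_iff (f := fun x =>
      Real.log ((𝔭.rnDeriv 𝔮 x).toReal)) hac).mpr hH
    simpa [smul_eq_mul] using this
  have hH' : ∫ x, (𝔭.rnDeriv 𝔮 x).toReal * Real.log ((𝔭.rnDeriv 𝔮 x).toReal) ∂𝔮 = H := by
    have := integral_rnDeriv_smul (f := fun x =>
      Real.log ((𝔭.rnDeriv 𝔮 x).toReal)) hac
    simpa [smul_eq_mul, hHdef] using this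
  -- nonnegativity of relative entropy
  have hH0 : 0 ≤ H := by
    have hpt : ∀ x, (𝔭.rnDeriv 𝔮 x).toReal - 1 ≤
        (𝔭.rnDeriv 𝔮 x).toReal * Real.log ((𝔭.rnDeriv 𝔮 x).toReal) :=
      fun x => aux_entropy_pt (hρnn x)
    have hmono := integral_mono (hρint.sub (integrable_const 1)) hρlogint hpt
    simp only [Pi.sub_apply] at hmono
    rw [integral_sub hρint (integrable_const 1), hρ1, hH'] at hmono
    simpa using hmono
  -- the comparison function φ = h^m + h^(-m)
  have hmeasr : ∀ r : ℝ, Measurable fun x => h x ^ r := by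
    intro r
    have heq : (fun x => h x ^ r) = fun x => Real.exp (Real.log (h x) * r) :=
      funext fun x => Real.rpow_def_of_pos (hpos x) r
    rw [heq]
    exact ((Real.measurable_log.comp hmeas).mul_const r).exp
  have hmeasm : Measurable fun x => h x ^ m := hmeasr m
  have hmeasnm : Measurable fun x => h x ^ (-m) := hmeasr (-m)
  have hbm : ∀ x, h x ^ m ≤ 1 + h x ^ q := by
    intro x
    have h0q : 0 ≤ h x ^ q := Real.rpow_nonneg (hpos x).le q
    rcases le_or_gt 1 (h x) with hx | hx
    · have := Real.rpow_le_rpow_of_exponent_le hx hmq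
      linarith
    · have := Real.rpow_le_one (hpos x).le hx.le hm.le
      linarith
  have hbnm : ∀ x, h x ^ (-m) ≤ 1 + h x ^ (-p) := by
    intro x
    have h0p : 0 ≤ h x ^ (-p) := Real.rpow_nonneg (hpos x).le (-p)
    rcases le_or_gt 1 (h x) with hx | hx
    · have := Real.rpow_le_one_of_one_le_of_nonpos hx (neg_nonpos.mpr hm.le)
      linarith
    · have := Real.rpow_le_rpow_of_exponent_ge (hpos x) hx.le (neg_le_neg hmp)
      linarith
  have hintm : Integrable (fun x => h x ^ m) 𝔮 := by
    refine Integrable.mono' ((integrable_const 1).add hhq) hmeasm.aestronglyMeasurable ?_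
    refine Filter.Eventually.of_forall fun x => ?_
    have h1 : (0:ℝ) ≤ h x ^ m := Real.rpow_nonneg (hpos x).le m
    rw [Real.norm_eq_abs, abs_of_nonneg h1]
    exact hbm x
  have hintnm : Integrable (fun x => h x ^ (-m)) 𝔮 := by
    refine Integrable.mono' ((integrable_const 1).add hhp) hmeasnm.aestronglyMeasurable ?_
    refine Filter.Eventually.of_forall fun x => ?_
    have h1 : (0:ℝ) ≤ h x ^ (-m) := Real.rpow_nonneg (hpos x).le (-m)
    rw [Real.norm_eq_abs, abs_of_nonneg h1]
    exact hbnm x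
  have hφint : Integrable (fun x => h x ^ m + h x ^ (-m)) 𝔮 := hintm.add hintnm
  set K : ℝ := ∫ x, (h x ^ m + h x ^ (-m)) ∂𝔮 with hK
  have hK1 : 1 ≤ K := by
    have hpt : ∀ x, (1:ℝ) ≤ h x ^ m + h x ^ (-m) := by
      intro x
      rcases le_or_gt 1 (h x) with hx | hx
      · have h1 : (1:ℝ) ≤ h x ^ m := by
          have := Real.rpow_le_rpow (by norm_num) hx hm.le
          simpa [Real.one_rpow] using this
        have h2 : (0:ℝ) ≤ h x ^ (-m) := Real.rpow_nonneg (hpos x).le (-m)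
        linarith
      · have h1 : (1:ℝ) ≤ h x ^ (-m) :=
          Real.one_le_rpow_of_pos_of_le_one_of_nonpos (hpos x) hx.le
            (neg_nonpos.mpr hm.le)
        have h2 : (0:ℝ) ≤ h x ^ m := Real.rpow_nonneg (hpos x).le m
        linarith
    have := integral_mono (integrable_const 1) hφint hpt
    simpa [← hK] using this
  have hKpos : 0 < K := lt_of_lt_of_le one_pos hK1
  -- integrability of the weighted LHS
  have hgint : Integrable (fun x => m * |Real.log (h x)|) 𝔭 := hLint.const_mul m
  have hLHSint : Integrable
      (fun x => (𝔭.rnDeriv 𝔮 x).toReal * (m * |Real.log (h x)|)) 𝔮 := by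
    have := (integrable_rnDeriv_smul_iff (f := fun x =>
      m * |Real.log (h x)|) hac).mpr hgint
    simpa [smul_eq_mul] using this
  -- pointwise Young inequality
  have key : ∀ x, (𝔭.rnDeriv 𝔮 x).toReal * (m * |Real.log (h x)|) ≤
      (𝔭.rnDeriv 𝔮 x).toReal * Real.log ((𝔭.rnDeriv 𝔮 x).toReal) -
        (𝔭.rnDeriv 𝔮 x).toReal + (h x ^ m + h x ^ (-m)) / K +
        Real.log K * (𝔭.rnDeriv 𝔮 x).toReal := by
    intro x
    set t : ℝ := (𝔭.rnDeriv 𝔮 x).toReal with ht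
    set g : ℝ := m * |Real.log (h x)| with hg
    have hy := aux_young (g - Real.log K) t (hρnn x)
    have hexpg : Real.exp g ≤ h x ^ m + h x ^ (-m) := by
      rcases le_or_gt 0 (Real.log (h x)) with hlx | hlx
      · have habs : |Real.log (h x)| = Real.log (h x) := abs_of_nonneg hlx
        have : Real.exp g = h x ^ m := by
          rw [hg, habs, Real.rpow_def_of_pos (hpos x) m, mul_comm]
        rw [this]
        have := Real.rpow_nonneg (hpos x).le (-m)
        linarith
      · have habs : |Real.log (h x)| = -Real.log (h x) := abs_of_neg hlx
        have : Real.exp g = h x ^ (-m) := by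
          rw [hg, habs, Real.rpow_def_of_pos (hpos x) (-m)]
          ring_nf
        rw [this]
        have := Real.rpow_nonneg (hpos x).le m
        linarith
    have hexp2 : Real.exp (g - Real.log K) ≤ (h x ^ m + h x ^ (-m)) / K := by
      rw [Real.exp_sub, Real.exp_log hKpos]
      gcongr
    have hexpand : t * (g - Real.log K) = t * g - Real.log K * t := by ring
    nlinarith [hy, hexp2]
  -- integrate the pointwise inequality
  have hRHSint : Integrable (fun x =>
      (𝔭.rnDeriv 𝔮 x).toReal * Real.log ((𝔭.rnDeriv 𝔮 x).toReal) -
        (𝔭.rnDeriv 𝔮 x).toReal + (h x ^ m + h x ^ (-m)) / K +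
        Real.log K * (𝔭.rnDeriv 𝔮 x).toReal) 𝔮 :=
    ((hρlogint.sub hρint).add (hφint.div_const K)).add (hρint.const_mul _)
  have hmono := integral_mono hLHSint hRHSint key
  have hLHS : ∫ x, (𝔭.rnDeriv 𝔮 x).toReal * (m * |Real.log (h x)|) ∂𝔮 =
      m * ∫ x, |Real.log (h x)| ∂𝔭 := by
    have heq := integral_rnDeriv_smul (f := fun x => m * |Real.log (h x)|) hac
    simp only [smul_eq_mul] at heq
    rw [heq, integral_const_mul]
  have hRHS : ∫ x, ((𝔭.rnDeriv 𝔮 x).toReal * Real.log ((𝔭.rnDeriv 𝔮 x).toReal) -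
        (𝔭.rnDeriv 𝔮 x).toReal + (h x ^ m + h x ^ (-m)) / K +
        Real.log K * (𝔭.rnDeriv 𝔮 x).toReal) ∂𝔮 = H + Real.log K := by
    have i1 : Integrable (fun x => (𝔭.rnDeriv 𝔮 x).toReal * Real.log ((𝔭.rnDeriv 𝔮 x).toReal) -
        (𝔭.rnDeriv 𝔮 x).toReal) 𝔮 := hρlogint.sub hρint
    have i2 : Integrable (fun x => (h x ^ m + h x ^ (-m)) / K) 𝔮 := hφint.div_const K
    have i3 : Integrable (fun x => (𝔭.rnDeriv 𝔮 x).toReal * Real.log ((𝔭.rnDeriv 𝔮 x).toReal) -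
        (𝔭.rnDeriv 𝔮 x).toReal + (h x ^ m + h x ^ (-m)) / K) 𝔮 := i1.add i2
    have i4 : Integrable (fun x => Real.log K * (𝔭.rnDeriv 𝔮 x).toReal) 𝔮 := hρint.const_mul _
    rw [integral_add i3 i4, integral_add i1 i2,
      integral_sub hρlogint hρint, integral_div, integral_const_mul,
      hH', hρ1, ← hK, div_self hKpos.ne']
    ring
  rw [hLHS, hRHS] at hmono
  -- Jensen : K ≤ A ^ m + B ^ m
  have hJq : ∫ x, h x ^ m ∂𝔮 ≤ A ^ m := by
    have hcomp : ∀ x, h x ^ m = (h x ^ q) ^ (m / q) := by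
      intro x
      rw [← Real.rpow_mul (hpos x).le]
      congr 1
      field_simp
    have hJ := aux_jensen 𝔮 (hmeasr q) (fun x => Real.rpow_pos_of_pos (hpos x) q)
      hhq (div_pos hm hq) (by rw [div_le_one hq]; exact hmq)
    calc ∫ x, h x ^ m ∂𝔮 = ∫ x, (h x ^ q) ^ (m / q) ∂𝔮 := by
          exact integral_congr_ae (Filter.Eventually.of_forall fun x => hcomp x)
      _ ≤ (∫ x, h x ^ q ∂𝔮) ^ (m / q) := hJ
      _ = A ^ m := by
          rw [hA, ← Real.rpow_mul hIq.le]
          congr 1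
          ring
  have hJp : ∫ x, h x ^ (-m) ∂𝔮 ≤ B ^ m := by
    have hcomp : ∀ x, h x ^ (-m) = (h x ^ (-p)) ^ (m / p) := by
      intro x
      rw [← Real.rpow_mul (hpos x).le]
      congr 1
      field_simp
    have hJ := aux_jensen 𝔮 (hmeasr (-p)) (fun x => Real.rpow_pos_of_pos (hpos x) (-p))
      hhp (div_pos hm hp) (by rw [div_le_one hp]; exact hmp)
    calc ∫ x, h x ^ (-m) ∂𝔮 = ∫ x, (h x ^ (-p)) ^ (m / p) ∂𝔮 := by
          exact integral_congr_ae (Filter.Eventually.of_forall fun x => hcomp x)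
      _ ≤ (∫ x, h x ^ (-p) ∂𝔮) ^ (m / p) := hJ
      _ = B ^ m := by
          rw [hB, ← Real.rpow_mul hIp.le]
          congr 1
          ring
  have hKAB : K ≤ A ^ m + B ^ m := by
    rw [hK, integral_add hintm hintnm]
    exact add_le_add hJq hJp
  -- concavity : A ^ m + B ^ m ≤ 2 * c ^ m
  have hconc : A ^ m + B ^ m ≤ 2 * c ^ m := by
    have h1 := aux_tangent hApos.le hcpos hm.le hm1
    have h2 := aux_tangent hBpos.le hcpos hm.le hm1
    have hAB : A / c + B / c = 2 := by
      rw [← add_div, hc]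
      field_simp
    calc A ^ m + B ^ m
        ≤ (m * (A / c) + (1 - m)) * c ^ m + (m * (B / c) + (1 - m)) * c ^ m :=
          add_le_add h1 h2
      _ = (m * (A / c + B / c) + (2 - 2 * m)) * c ^ m := by ring
      _ = 2 * c ^ m := by rw [hAB]; ring
  have hlogK : Real.log K ≤ Real.log 2 + m * Real.log c := by
    calc Real.log K ≤ Real.log (2 * c ^ m) :=
          Real.log_le_log hKpos (hKAB.trans hconc)
      _ = Real.log 2 + m * Real.log c := by
          rw [Real.log_mul two_ne_zero (Real.rpow_pos_of_pos hcpos m).ne',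
            Real.log_rpow hcpos]
  have hlogc : Real.log c ≤ Real.log 2 * D := by
    have hl2 : (0:ℝ) < Real.log 2 := Real.log_pos one_lt_two
    have h1 : Real.log c = Real.log 2 * Real.logb 2 c := by
      rw [Real.logb]
      field_simp
    rw [h1]
    exact mul_le_mul_of_nonneg_left (le_max_right _ _) hl2.le
  have hexpH : H + Real.log 2 ≤ 2 * Real.exp (H - 1) := aux_exp_bound H
  -- final arithmetic
  have hchain : m * ∫ x, |Real.log (h x)| ∂𝔭 ≤
      (H + Real.log 2) + m * (Real.log 2 * D) := by
    have := mul_le_mul_of_nonneg_left hlogc hm.le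
    linarith [hmono, hlogK]
  have hkey2 : m * ∫ x, |Real.log (h x)| ∂𝔭 ≤ (H + Real.log 2) * (1 + m * D) := by
    have hHD : 0 ≤ H * (m * D) := mul_nonneg hH0 (mul_nonneg hm.le hD0)
    nlinarith [hchain, hHD]
  have hfinal : ∫ x, |Real.log (h x)| ∂𝔭 ≤ (H + Real.log 2) * (1 / m + D) := by
    have hrw : (H + Real.log 2) * (1 / m + D) = ((H + Real.log 2) * (1 + m * D)) / m := by
      rw [eq_div_iff hm.ne']
      have hmm : 1 / m * m = 1 := one_div_mul_cancel hm.ne'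
      calc (H + Real.log 2) * (1 / m + D) * m
          = (H + Real.log 2) * (1 / m * m) + (H + Real.log 2) * D * m := by ring
        _ = (H + Real.log 2) * (1 + m * D) := by rw [hmm]; ring
    rw [hrw]
    rw [le_div_iff₀ hm]
    nlinarith [hkey2]
  calc ∫ x, |Real.log (h x)| ∂𝔭 ≤ (H + Real.log 2) * (1 / m + D) := hfinal
    _ ≤ 2 * Real.exp (H - 1) * (1 / m + D) :=
        mul_le_mul_of_nonneg_right hexpH hinvmD
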